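/- Let $(X,y)$ be fixed, let $w$ satisfy the leverage-filter guarantee (for all $i \in \mathrm{supp}(w)$, $x_i^\top(X^\top\mathrm{diag}(w)X)^{-1}x_i \le L$ and $\|w\|_1 \ge n - k$), and suppose $kL \le 1/2$. Let $u$ be the output of greedy residual thresholding on $(X,y)$ with threshold $R$ starting from $w$. If $\|u\|_1 \ge n - k$, then $u$ is $(2L, R)$-good for $(X,y)$. -/

import Mathlib

open Matrix

/-- The weighted OLS solution `β_w = (Xᵀ diag(w) X)⁻¹ Xᵀ diag(w) y`. -/
noncomputable def weightedOLS {n d : ℕ} (X : Matrix (Fin n) (Fin d) ℝ)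
    (y : Fin n → ℝ) (w : Fin n → ℝ) : Fin d → ℝ :=
  (Xᵀ * Matrix.diagonal w * X)⁻¹ *ᵥ (Xᵀ *ᵥ fun i => w i * y i)

/-- Absolute residual of point `i` under the weighted OLS fit with weights `w`. -/
noncomputable def residW {n d : ℕ} (X : Matrix (Fin n) (Fin d) ℝ)
    (y : Fin n → ℝ) (w : Fin n → ℝ) (i : Fin n) : ℝ :=
  |y i - X i ⬝ᵥ weightedOLS X y w|

/-- Greedy residual thresholding with fuel. -/
noncomputable def residualThresholding {n d : ℕ} (X : Matrix (Fin n) (Fin d) ℝ)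
    (y : Fin n → ℝ) (R : ℝ) : ℕ → (Fin n → ℝ) → (Fin n → ℝ)
  | 0, w => w
  | (m + 1), w =>
    let S : Finset (Fin n) := Finset.univ.filter (fun i => w i ≠ 0)
    let bad : Finset (Fin n) := S.filter (fun i => R < residW X y w i)
    if hbad : bad.Nonempty then
      have hS : S.Nonempty := hbad.mono (Finset.filter_subset _ _)
      let mx : ℝ := S.sup' hS (fun i => residW X y w i)
      let arg : Finset (Fin n) := S.filter (fun i => residW X y w i = mx)
      if harg : arg.Nonempty then
        residualThresholding X y R m (Function.update w (arg.min' harg) 0)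
      else w
    else w

section aux
variable {n d : ℕ}

lemma herm_of_symm {A : Matrix (Fin d) (Fin d) ℝ} (h : Aᵀ = A) : A.IsHermitian := by
  have : Aᴴ = A := by
    ext i j
    rw [Matrix.conjTranspose_apply, star_trivial]
    exact congrFun (congrFun h i) j
  exact this

lemma dot_symm {A : Matrix (Fin d) (Fin d) ℝ} (h : Aᵀ = A) (a b : Fin d → ℝ) :
    a ⬝ᵥ (A *ᵥ b) = b ⬝ᵥ (A *ᵥ a) := by
  rw [Matrix.dotProduct_mulVec]
  conv_lhs => rw [← h, Matrix.vecMul_transpose]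
  rw [dotProduct_comm]

lemma quadForm_eq (X : Matrix (Fin n) (Fin d) ℝ) (t : Fin n → ℝ) (v : Fin d → ℝ) :
    v ⬝ᵥ ((Xᵀ * Matrix.diagonal t * X) *ᵥ v) = ∑ i, t i * ((X *ᵥ v) i) ^ 2 := by
  rw [← Matrix.mulVec_mulVec, ← Matrix.mulVec_mulVec, Matrix.dotProduct_mulVec v Xᵀ,
    Matrix.vecMul_transpose, dotProduct]
  refine Finset.sum_congr rfl fun i _ => ?_
  rw [Matrix.mulVec_diagonal]; ring

lemma gram_symm (X : Matrix (Fin n) (Fin d) ℝ) (t : Fin n → ℝ) :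
    (Xᵀ * Matrix.diagonal t * X)ᵀ = Xᵀ * Matrix.diagonal t * X := by
  rw [Matrix.transpose_mul, Matrix.transpose_mul, Matrix.diagonal_transpose,
    Matrix.transpose_transpose, Matrix.mul_assoc]

lemma cauchyA {A : Matrix (Fin d) (Fin d) ℝ} (hs : Aᵀ = A)
    (hpsd : ∀ v, 0 ≤ v ⬝ᵥ (A *ᵥ v)) (p v : Fin d → ℝ) :
    (p ⬝ᵥ (A *ᵥ v)) ^ 2 ≤ (p ⬝ᵥ (A *ᵥ p)) * (v ⬝ᵥ (A *ᵥ v)) := by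
  have h := discrim_le_zero (a := v ⬝ᵥ (A *ᵥ v)) (b := 2 * (p ⬝ᵥ (A *ᵥ v)))
      (c := p ⬝ᵥ (A *ᵥ p)) ?_
  · rw [discrim] at h; nlinarith [h]
  · intro x
    have h0 := hpsd (p + x • v)
    have e : (p + x • v) ⬝ᵥ (A *ᵥ (p + x • v))
        = (v ⬝ᵥ (A *ᵥ v)) * (x * x) + 2 * (p ⬝ᵥ (A *ᵥ v)) * x + p ⬝ᵥ (A *ᵥ p) := by
      have hvp : v ⬝ᵥ (A *ᵥ p) = p ⬝ᵥ (A *ᵥ v) := dot_symm hs v p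
      rw [Matrix.mulVec_add, Matrix.mulVec_smul, add_dotProduct,
        smul_dotProduct, dotProduct_add, dotProduct_add,
        dotProduct_smul, dotProduct_smul, hvp]
      simp only [smul_eq_mul]; ring
    rw [e] at h0; exact h0
end aux
section struct
variable {n d : ℕ} (X : Matrix (Fin n) (Fin d) ℝ) (y : Fin n → ℝ) (R : ℝ)

lemma rt_succ_no_bad (m : ℕ) (w : Fin n → ℝ)
    (h : ¬ ((Finset.univ.filter (fun i => w i ≠ 0)).filter
        (fun i => R < residW X y w i)).Nonempty) :
    residualThresholding X y R (m + 1) w = w := by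
  simp only [residualThresholding]
  rw [dif_neg h]

lemma rt_succ_bad (m : ℕ) (w : Fin n → ℝ)
    (h : ((Finset.univ.filter (fun i => w i ≠ 0)).filter
        (fun i => R < residW X y w i)).Nonempty) :
    ∃ j, w j ≠ 0 ∧ residualThresholding X y R (m + 1) w
      = residualThresholding X y R m (Function.update w j 0) := by
  simp only [residualThresholding]
  rw [dif_pos h]
  split
  · rename_i harg
    have hj := Finset.min'_mem _ harg
    have hj2 := (Finset.mem_filter.1 ((Finset.filter_subset _ _) hj)).2
    exact ⟨_, hj2, rfl⟩
  · rename_i harg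
    exfalso
    apply harg
    obtain ⟨i, hi, hie⟩ := Finset.exists_mem_eq_sup'
      (h.mono (Finset.filter_subset _ _)) (fun i => residW X y w i)
    exact ⟨i, Finset.mem_filter.2 ⟨hi, hie.symm⟩⟩

lemma rt_vals (m : ℕ) (w : Fin n → ℝ) (i : Fin n) :
    residualThresholding X y R m w i = 0 ∨ residualThresholding X y R m w i = w i := by
  induction m generalizing w with
  | zero => right; rfl
  | succ m ih =>
    by_cases h : ((Finset.univ.filter (fun i => w i ≠ 0)).filter
        (fun i => R < residW X y w i)).Nonempty
    · obtain ⟨j, hj, heq⟩ := rt_succ_bad X y R m w h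
      rw [heq]
      rcases ih (Function.update w j 0) with h1 | h1
      · left; exact h1
      · rw [h1, Function.update_apply]
        split_ifs
        · left; rfl
        · right; rfl
    · rw [rt_succ_no_bad X y R m w h]; right; rfl

lemma rt_resid (m : ℕ) (w : Fin n → ℝ)
    (hc : (Finset.univ.filter (fun i => w i ≠ 0)).card ≤ m) :
    ∀ i, residualThresholding X y R m w i ≠ 0 →
      residW X y (residualThresholding X y R m w) i ≤ R := by
  induction m generalizing w with
  | zero =>
    intro i hi
    exfalso
    apply hi
    have : (Finset.univ.filter (fun i => w i ≠ 0)) = ∅ := Finset.card_eq_zero.1 (Nat.le_zero.1 hc)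
    have := Finset.filter_eq_empty_iff.1 this (Finset.mem_univ i)
    simpa [residualThresholding] using not_not.1 this
  | succ m ih =>
    by_cases h : ((Finset.univ.filter (fun i => w i ≠ 0)).filter
        (fun i => R < residW X y w i)).Nonempty
    · obtain ⟨j, hj, heq⟩ := rt_succ_bad X y R m w h
      rw [heq]
      apply ih
      have hset : Finset.univ.filter (fun i => Function.update w j 0 i ≠ 0)
          = (Finset.univ.filter (fun i => w i ≠ 0)).erase j := by
        ext i
        simp only [Finset.mem_filter, Finset.mem_univ, true_and, Finset.mem_erase,
          Function.update_apply]
        split_ifs with hij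
        · simp [hij]
        · simp [hij]
      have hjm : j ∈ Finset.univ.filter (fun i => w i ≠ 0) :=
        Finset.mem_filter.2 ⟨Finset.mem_univ j, hj⟩
      rw [hset, Finset.card_erase_of_mem hjm]
      omega
    · rw [rt_succ_no_bad X y R m w h]
      intro i hi
      have hbe : ((Finset.univ.filter (fun i => w i ≠ 0)).filter
          (fun i => R < residW X y w i)) = ∅ := Finset.not_nonempty_iff_eq_empty.1 h
      have := Finset.filter_eq_empty_iff.1 hbe
        (Finset.mem_filter.2 ⟨Finset.mem_univ i, hi⟩)
      linarith [not_lt.1 this]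
end struct

theorem residualThresholding_returns_good {n d : ℕ}
    (X : Matrix (Fin n) (Fin d) ℝ) (y : Fin n → ℝ) (k : ℕ)
    (L R : ℝ) (hL : 0 < L) (hR : 0 < R) (hkL : (k : ℝ) * L ≤ 1 / 2)
    (w : Fin n → ℝ) (hw01 : ∀ i, 0 ≤ w i ∧ w i ≤ 1)
    (hinvw : IsUnit (Xᵀ * Matrix.diagonal w * X).det)
    (hlevw : ∀ i, w i ≠ 0 → X i ⬝ᵥ ((Xᵀ * Matrix.diagonal w * X)⁻¹ *ᵥ X i) ≤ L)
    (hw1 : (n : ℝ) - k ≤ ∑ i, w i)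
    (hu1 : (n : ℝ) - k ≤ ∑ i, residualThresholding X y R n w i) :
    IsUnit (Xᵀ * Matrix.diagonal (residualThresholding X y R n w) * X).det ∧
    (∀ i, residualThresholding X y R n w i ≠ 0 →
      X i ⬝ᵥ ((Xᵀ * Matrix.diagonal (residualThresholding X y R n w) * X)⁻¹ *ᵥ X i)
        ≤ 2 * L) ∧
    (∀ i, residualThresholding X y R n w i ≠ 0 →
      |X i ⬝ᵥ weightedOLS X y (residualThresholding X y R n w) - y i| ≤ R) := by
  classical
  set u := residualThresholding X y R n w with hu
  have hvals : ∀ i, u i = 0 ∨ u i = w i := fun i => rt_vals X y R n w i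
  set A := Xᵀ * Matrix.diagonal w * X with hA
  set B := Xᵀ * Matrix.diagonal u * X with hB
  have hAsym : Aᵀ = A := gram_symm X w
  have hBsym : Bᵀ = B := gram_symm X u
  have hApsd : ∀ v, 0 ≤ v ⬝ᵥ (A *ᵥ v) := by
    intro v
    rw [hA, quadForm_eq]
    exact Finset.sum_nonneg fun i _ => mul_nonneg (hw01 i).1 (sq_nonneg _)
  have hAA : A * A⁻¹ = 1 := Matrix.mul_nonsing_inv _ hinvw
  have hA'A : A⁻¹ * A = 1 := Matrix.nonsing_inv_mul _ hinvw
  have hpsdA : Matrix.PosSemidef A :=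
    Matrix.posSemidef_iff_dotProduct_mulVec.2 ⟨herm_of_symm hAsym, fun x => by simpa using hApsd x⟩
  have hApos : ∀ v, v ≠ 0 → 0 < v ⬝ᵥ (A *ᵥ v) := by
    intro v hv
    rcases (hApsd v).lt_or_eq with h | h
    · exact h
    · exfalso
      have hAv : A *ᵥ v = 0 := (hpsdA.dotProduct_mulVec_zero_iff v).1 (by simpa using h.symm)
      have : v = 0 := by
        rw [← Matrix.one_mulVec v, ← hA'A, ← Matrix.mulVec_mulVec, hAv, Matrix.mulVec_zero]
      exact hv this
  -- leverage implies pointwise bound on squared coordinates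
  have hlev2 : ∀ i, w i ≠ 0 → ∀ v, ((X *ᵥ v) i) ^ 2 ≤ L * (v ⬝ᵥ (A *ᵥ v)) := by
    intro i hi v
    have hAp : A *ᵥ (A⁻¹ *ᵥ X i) = X i := by
      rw [Matrix.mulVec_mulVec, hAA, Matrix.one_mulVec]
    have hXvi : (X *ᵥ v) i = (A⁻¹ *ᵥ X i) ⬝ᵥ (A *ᵥ v) := by
      rw [dot_symm hAsym, hAp, dotProduct_comm]
      rfl
    have hpAp : (A⁻¹ *ᵥ X i) ⬝ᵥ (A *ᵥ (A⁻¹ *ᵥ X i)) ≤ L := by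
      rw [hAp, dotProduct_comm]
      exact hlevw i hi
    have hcs := cauchyA hAsym hApsd (A⁻¹ *ᵥ X i) v
    rw [hXvi]
    exact le_trans hcs (mul_le_mul_of_nonneg_right hpAp (hApsd v))
  -- total removed weight is at most k
  have hcsum : ∑ i, (w i - u i) ≤ (k : ℝ) := by
    have h1 : ∑ i, w i ≤ (n : ℝ) := by
      calc ∑ i, w i ≤ ∑ _i : Fin n, (1 : ℝ) := Finset.sum_le_sum fun i _ => (hw01 i).2
        _ = n := by simp
    rw [Finset.sum_sub_distrib]
    linarith [hu1]
  have hc0 : ∀ i, 0 ≤ w i - u i := by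
    intro i
    rcases hvals i with h | h
    · rw [h]; linarith [(hw01 i).1]
    · rw [h]; linarith
  -- B dominates A/2
  have hBge : ∀ v, (1 / 2) * (v ⬝ᵥ (A *ᵥ v)) ≤ v ⬝ᵥ (B *ᵥ v) := by
    intro v
    have hAq : v ⬝ᵥ (A *ᵥ v) = ∑ i, w i * ((X *ᵥ v) i) ^ 2 := by rw [hA, quadForm_eq]
    have hBq : v ⬝ᵥ (B *ᵥ v) = ∑ i, u i * ((X *ᵥ v) i) ^ 2 := by rw [hB, quadForm_eq]
    have key : ∑ i, (w i - u i) * ((X *ᵥ v) i) ^ 2 ≤ (k : ℝ) * (L * (v ⬝ᵥ (A *ᵥ v))) := by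
      calc ∑ i, (w i - u i) * ((X *ᵥ v) i) ^ 2
          ≤ ∑ _i : Fin n, (w _i - u _i) * (L * (v ⬝ᵥ (A *ᵥ v))) := by
            refine Finset.sum_le_sum fun i _ => ?_
            rcases eq_or_ne (w i - u i) 0 with h0 | h0
            · rw [h0]; simp
            · have hwi : w i ≠ 0 := by
                rcases hvals i with h | h
                · intro hw0; apply h0; rw [h, hw0]; ring
                · intro hw0; apply h0; rw [h]; ring
              exact mul_le_mul_of_nonneg_left (hlev2 i hwi v) (hc0 i)
        _ = (∑ i, (w i - u i)) * (L * (v ⬝ᵥ (A *ᵥ v))) := (Finset.sum_mul _ _ _).symm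
        _ ≤ (k : ℝ) * (L * (v ⬝ᵥ (A *ᵥ v))) := by
            refine mul_le_mul_of_nonneg_right hcsum ?_
            exact mul_nonneg hL.le (hApsd v)
    have hsub : ∑ i, u i * ((X *ᵥ v) i) ^ 2
        = (∑ i, w i * ((X *ᵥ v) i) ^ 2) - ∑ i, (w i - u i) * ((X *ᵥ v) i) ^ 2 := by
      rw [← Finset.sum_sub_distrib]
      exact Finset.sum_congr rfl fun i _ => by ring
    have hmul : (k : ℝ) * L * (v ⬝ᵥ (A *ᵥ v)) ≤ (1 / 2) * (v ⬝ᵥ (A *ᵥ v)) :=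
      mul_le_mul_of_nonneg_right hkL (hApsd v)
    rw [hBq, hsub, ← hAq]
    nlinarith [key, hApsd v]
  have hBpos : Matrix.PosDef B := by
    refine Matrix.posDef_iff_dotProduct_mulVec.2 ⟨herm_of_symm hBsym, fun v hv => ?_⟩
    have h1 := hBge v
    have h2 := hApos v hv
    simpa using lt_of_lt_of_le (by linarith) h1
  have hBdet : IsUnit B.det := isUnit_iff_ne_zero.2 (ne_of_gt hBpos.det_pos)
  have hBB : B * B⁻¹ = 1 := Matrix.mul_nonsing_inv _ hBdet
  refine ⟨hBdet, ?_, ?_⟩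
  · intro i hi
    have hwi : w i ≠ 0 := by
      rcases hvals i with h | h
      · exact absurd h hi
      · rw [← h]; exact hi
    set v := B⁻¹ *ᵥ X i with hv
    have hBv : B *ᵥ v = X i := by
      rw [hv, Matrix.mulVec_mulVec, hBB, Matrix.one_mulVec]
    have e2 : v ⬝ᵥ (B *ᵥ v) = X i ⬝ᵥ v := by rw [hBv, dotProduct_comm]
    have hAp : A *ᵥ (A⁻¹ *ᵥ X i) = X i := by
      rw [Matrix.mulVec_mulVec, hAA, Matrix.one_mulVec]
    have hz := hApsd (v - (2 : ℝ) • (A⁻¹ *ᵥ X i))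
    have hexp : (v - (2 : ℝ) • (A⁻¹ *ᵥ X i)) ⬝ᵥ (A *ᵥ (v - (2 : ℝ) • (A⁻¹ *ᵥ X i)))
        = v ⬝ᵥ (A *ᵥ v) - 4 * (X i ⬝ᵥ v) + 4 * (X i ⬝ᵥ (A⁻¹ *ᵥ X i)) := by
      have hpv : (A⁻¹ *ᵥ X i) ⬝ᵥ (A *ᵥ v) = X i ⬝ᵥ v := by
        rw [dot_symm hAsym, hAp, dotProduct_comm]
      have hvp : v ⬝ᵥ (A *ᵥ (A⁻¹ *ᵥ X i)) = X i ⬝ᵥ v := by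
        rw [hAp, dotProduct_comm]
      have hpp : (A⁻¹ *ᵥ X i) ⬝ᵥ (A *ᵥ (A⁻¹ *ᵥ X i)) = X i ⬝ᵥ (A⁻¹ *ᵥ X i) := by
        rw [hAp, dotProduct_comm]
      simp only [Matrix.mulVec_sub, Matrix.mulVec_smul, sub_dotProduct,
        dotProduct_sub, smul_dotProduct, dotProduct_smul,
        smul_eq_mul]
      rw [hpv, hvp, hpp]
      ring
    rw [hexp] at hz
    have hlevi := hlevw i hwi
    have hb := hBge v
    show X i ⬝ᵥ v ≤ 2 * L
    linarith [e2 ▸ hb]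
  · intro i hi
    rw [abs_sub_comm]
    exact rt_resid X y R n w
      (le_trans (Finset.card_filter_le _ _) (by simp)) i hi
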